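/- Let L ⊂ ℝ² be a convex body with the origin o on its boundary and L ⊂ {x : x₂ ≥ 0}. For small ε > 0 let p_l(ε) and p_r(ε) be the two intersection points of the line {x₂ = ε} with ∂L (with p_l to the left of p_r), and let θ₁(ε), θ₂(ε) ∈ [0, π/2) be the suprema of the acute angles formed with the x₁-axis by supporting lines of L at p_l(ε) and at p_r(ε), respectively. Then (θ₁(ε) + θ₂(ε))/ε → ∞ as ε → 0⁺. -/

import Mathlib

open Metric Set Filter
open scoped RealInnerProductSpace

noncomputable section

abbrev E2 := EuclideanSpace ℝ (Fin 2)

def IsConvexBody2 (L : Set E2) : Prop :=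
  Convex ℝ L ∧ IsCompact L ∧ (interior L).Nonempty

def outerNormalAt2 (L : Set E2) (p ν : E2) : Prop :=
  ‖ν‖ = 1 ∧ ∀ z ∈ L, ⟪ν, z - p⟫ ≤ (0:ℝ)

/-- The supremum of the acute angles made with the `x₁`-axis by supporting lines of `L`
at a boundary point `p`.  A supporting line with outer unit normal `ν` makes the acute
angle `arcsin |ν₁|` with the `x₁`-axis. -/
def supAngle (L : Set E2) (p : E2) : ℝ :=
  sSup {a | ∃ ν : E2, outerNormalAt2 L p ν ∧ a = Real.arcsin |ν 0|}

lemma inner2 (ν z : E2) : ⟪ν, z⟫ = ν 0 * z 0 + ν 1 * z 1 := by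
  simp [PiLp.inner_apply, Fin.sum_univ_two, RCLike.inner_apply, conj_trivial]
  ring

lemma normsq (ν : E2) (h : ‖ν‖ = 1) : ν 0 ^ 2 + ν 1 ^ 2 = 1 := by
  have h2 : ⟪ν, ν⟫ = ‖ν‖ * ‖ν‖ := real_inner_self_eq_norm_mul_norm ν
  rw [inner2, h] at h2
  nlinarith [h2]

lemma coord_le_norm (z : E2) (i : Fin 2) : |z i| ≤ ‖z‖ := by
  rw [EuclideanSpace.norm_eq]
  rw [show |z i| = Real.sqrt (|z i|^2) by rw [Real.sqrt_sq_eq_abs, abs_abs]]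
  apply Real.sqrt_le_sqrt
  fin_cases i <;> simp [Fin.sum_univ_two, sq_abs] <;> nlinarith [sq_nonneg (z 0), sq_nonneg (z 1)]

lemma exists_outer_normal {L : Set E2} (hconv : Convex ℝ L)
    {w : E2} (hw : w ∈ interior L) {p : E2} (hp : p ∉ interior L) :
    ∃ ν : E2, outerNormalAt2 L p ν := by
  obtain ⟨f, hf⟩ := geometric_hahn_banach_open_point hconv.interior isOpen_interior hp
  have hfle : ∀ z ∈ L, f z ≤ f p := by
    intro z hz
    have hseq : ∀ n : ℕ, f (z + ((1:ℝ)/(n+1)) • (w - z)) < f p := by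
      intro n
      apply hf
      refine hconv.add_smul_sub_mem_interior hz hw ⟨by positivity, ?_⟩
      rw [div_le_one (by positivity)]
      linarith [Nat.cast_nonneg (α := ℝ) n]
    have h1 : Tendsto (fun n : ℕ => z + ((1:ℝ)/(n+1)) • (w - z)) atTop (nhds z) := by
      have h2 := (tendsto_one_div_add_atTop_nhds_zero_nat (𝕜 := ℝ)).smul_const (w - z)
      simpa using tendsto_const_nhds.add h2
    have hlim := ((f.continuous.tendsto z).comp h1)
    exact le_of_tendsto hlim (Eventually.of_forall fun n => (hseq n).le)
  set v := (InnerProductSpace.toDual ℝ E2).symm f with hv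
  have hvf : ∀ x : E2, ⟪v, x⟫ = f x := fun x => InnerProductSpace.toDual_symm_apply
  have hvne : v ≠ 0 := by
    intro h
    have h1 : f w < f p := hf w hw
    have h2 : f w = 0 := by rw [← hvf, h, inner_zero_left]
    have h3 : f p = 0 := by rw [← hvf, h, inner_zero_left]
    rw [h2, h3] at h1; exact lt_irrefl _ h1
  refine ⟨‖v‖⁻¹ • v, ⟨?_, ?_⟩⟩
  · rw [norm_smul, norm_inv, norm_norm]
    exact inv_mul_cancel₀ (norm_ne_zero_iff.mpr hvne)
  · intro z hz
    rw [real_inner_smul_left, inner_sub_right, hvf, hvf]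
    have := hfle z hz
    have hnv : (0:ℝ) ≤ ‖v‖⁻¹ := by positivity
    exact mul_nonpos_of_nonneg_of_nonpos hnv (by linarith)

lemma normal_inner_le {L : Set E2} {p ν z : E2} (hν : outerNormalAt2 L p ν)
    {δ : ℝ} (hδ : 0 < δ) (hball : ball z (2*δ) ⊆ L) : ⟪ν, z - p⟫ ≤ -δ := by
  have hz' : z + δ • ν ∈ L := by
    apply hball
    rw [mem_ball, dist_eq_norm, add_sub_cancel_left, norm_smul, hν.1,
      Real.norm_eq_abs, abs_of_pos hδ]
    linarith
  have h2 := hν.2 _ hz'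
  have h3 : ⟪ν, z + δ • ν - p⟫ = ⟪ν, z - p⟫ + δ := by
    rw [show z + δ • ν - p = (z - p) + δ • ν by abel]
    rw [inner_add_right, real_inner_smul_right, real_inner_self_eq_norm_mul_norm, hν.1]
    ring
  linarith [h3 ▸ h2]

lemma normal_inner_lt {L : Set E2} {p ν z : E2} (hν : outerNormalAt2 L p ν)
    (hz : z ∈ interior L) : ⟪ν, z - p⟫ < 0 := by
  obtain ⟨d, hd, hball⟩ := Metric.isOpen_iff.mp isOpen_interior z hz
  have h := normal_inner_le hν (δ := d/2) (by linarith)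
    (by rw [show 2*(d/2) = d by ring]; exact hball.trans interior_subset)
  linarith

lemma bddAbove_angles (L : Set E2) (p : E2) :
    BddAbove {a | ∃ ν, outerNormalAt2 L p ν ∧ a = Real.arcsin |ν 0|} := by
  refine ⟨Real.pi/2, ?_⟩
  rintro a ⟨ν, _, rfl⟩
  exact Real.arcsin_le_pi_div_two _

lemma le_supAngle {L : Set E2} {p ν : E2} (hν : outerNormalAt2 L p ν) :
    Real.arcsin |ν 0| ≤ supAngle L p :=
  le_csSup (bddAbove_angles L p) ⟨ν, hν, rfl⟩

lemma supAngle_nonneg {L : Set E2} {p : E2} (h : ∃ ν, outerNormalAt2 L p ν) :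
    0 ≤ supAngle L p := by
  obtain ⟨ν, hν⟩ := h
  exact le_trans (Real.arcsin_nonneg.2 (abs_nonneg _)) (le_supAngle hν)

private lemma arith1 {a b : ℝ} (h : a ^ 2 + b ^ 2 = 1) : |a| ≤ 1 := by
  nlinarith [sq_abs a, sq_nonneg b, abs_nonneg a]

private lemma arith2 {c e d r : ℝ} (h : e * (8 * c * d) < r) : c * e * (2 * d) < r / 4 := by
  nlinarith

private lemma arith3 {x y A B R W : ℝ} (h1 : A + y * W ≤ -R) (h2 : |A| ≤ B)
    (h3 : B < R / 4) (h4 : R / 2 ≤ W) (hR : 0 < R) (hx : |x| < 1 / 2)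
    (hs : x ^ 2 + y ^ 2 = 1) : y ≤ -(1 / 2) := by
  obtain ⟨h2a, h2b⟩ := abs_le.mp h2
  have hyW : y * W ≤ -R + R / 4 := by linarith
  have hyneg : y < 0 := by nlinarith
  nlinarith [abs_le.mp hx.le, sq_abs x, sq_nonneg (y + 1 / 2)]

private lemma arith4 {x a b : ℝ} (h1 : x * (a - b) < 0) (h2 : a ≤ b) : 0 < x := by
  by_contra hx
  push_neg at hx
  nlinarith [mul_nonneg (neg_nonneg.2 hx) (sub_nonneg.2 h2)]

private lemma arith5 {x y C ε ε'' q p : ℝ} (h1 : x * (q - p) + y * (ε'' - ε) ≤ 0)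
    (hy : y ≤ -(1 / 2)) (h2 : ε'' ≤ ε / 2) (h3 : 0 < ε'') (hx : 0 < x)
    (hxC : x < C * ε) (hC : 0 < C) (hε : 0 < ε) : q ≤ p - 1 / (4 * C) := by
  have t0 : (1 / 2) * (ε / 2) ≤ (-y) * (ε - ε'') :=
    mul_le_mul (by linarith) (by linarith) (by linarith) (by linarith)
  have t1 : y * (ε'' - ε) = (-y) * (ε - ε'') := by ring
  have hkey : ε / 4 ≤ x * (p - q) := by nlinarith
  have hpq : 0 ≤ p - q := by nlinarith
  have h5 : ε / 4 ≤ C * ε * (p - q) := by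
    have := mul_le_mul_of_nonneg_right hxC.le hpq
    nlinarith
  have h7 : 1 / 4 ≤ C * (p - q) := by
    by_contra hcon
    push_neg at hcon
    have := mul_lt_mul_of_pos_left hcon hε
    nlinarith
  have h6 : 1 / (4 * C) ≤ p - q := by
    rw [div_le_iff₀ (by positivity : (0:ℝ) < 4 * C)]
    nlinarith
  linarith

set_option maxHeartbeats 1000000 in
theorem stmt11 (L : Set E2) (hL : IsConvexBody2 L)
    (h0 : (0:E2) ∈ frontier L) (hpos : L ⊆ {x : E2 | 0 ≤ x 1})
    (ε' : ℝ) (hε' : 0 < ε') (pl pr : ℝ → E2)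
    (hmem : ∀ ε ∈ Set.Ioo (0:ℝ) ε',
      pl ε ∈ frontier L ∧ pr ε ∈ frontier L ∧
      (pl ε) 1 = ε ∧ (pr ε) 1 = ε ∧
      ∀ x ∈ frontier L, x 1 = ε → (pl ε) 0 ≤ x 0 ∧ x 0 ≤ (pr ε) 0) :
    Filter.Tendsto (fun ε => (supAngle L (pl ε) + supAngle L (pr ε)) / ε)
      (nhdsWithin 0 (Set.Ioi 0)) Filter.atTop := by
  obtain ⟨hconv, hcomp, hint⟩ := hL
  have hcl : IsClosed L := hcomp.isClosed
  have hfrL : frontier L ⊆ L := hcl.frontier_subset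
  have h0L : (0:E2) ∈ L := hfrL h0
  obtain ⟨w, hw⟩ := hint
  obtain ⟨r2, hr2pos, hball2⟩ := Metric.isOpen_iff.mp isOpen_interior w hw
  set r : ℝ := r2 / 2 with hr
  have hrpos : 0 < r := by positivity
  have hball : ball w (2*r) ⊆ interior L := by
    rw [show 2*r = r2 by rw [hr]; ring]; exact hball2
  set e0 : E2 := EuclideanSpace.single 0 (1:ℝ) with he0
  set e1 : E2 := EuclideanSpace.single 1 (1:ℝ) with he1
  have he00 : e0 0 = 1 := by simp [he0, EuclideanSpace.single_apply]
  have he01 : e0 1 = 0 := by simp [he0, EuclideanSpace.single_apply]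
  have hne0 : ‖e0‖ = 1 := by simp [he0, EuclideanSpace.norm_single]
  have hne1 : ‖e1‖ = 1 := by simp [he1, EuclideanSpace.norm_single]
  -- w 1 ≥ r
  have hw1r : r ≤ w 1 := by
    have hmem1 : w - r • e1 ∈ L := by
      apply interior_subset; apply hball
      rw [mem_ball, dist_eq_norm, sub_sub_cancel_left, norm_neg, norm_smul, hne1,
        Real.norm_eq_abs, abs_of_pos hrpos]
      linarith
    have := hpos hmem1
    simp only [Set.mem_setOf_eq] at this
    have hcoord : (w - r • e1) 1 = w 1 - r := by
      simp [he1, EuclideanSpace.single_apply]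
    rw [hcoord] at this
    linarith
  have hw1pos : 0 < w 1 := lt_of_lt_of_le hrpos hw1r
  -- bound D
  obtain ⟨D₀, hD₀⟩ := hcomp.isBounded.exists_norm_le
  set D : ℝ := max D₀ 1 with hD
  have hD1 : (1:ℝ) ≤ D := le_max_right _ _
  have hDpos : (0:ℝ) < D := by linarith
  have hcoordD : ∀ z ∈ L, |z 0| ≤ D := by
    intro z hz
    exact (coord_le_norm z 0).trans ((hD₀ z hz).trans (le_max_left _ _))
  -- interior slice points
  have hqint : ∀ ε s : ℝ, 0 < ε → ε < r → |s| ≤ r →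
      ((ε / w 1) • (w + s • e0)) ∈ interior L ∧
      ((ε / w 1) • (w + s • e0)) 1 = ε ∧
      ((ε / w 1) • (w + s • e0)) 0 = (ε / w 1) * (w 0 + s) := by
    intro ε s hε hεr hs
    have hx : w + s • e0 ∈ interior L := by
      apply hball
      rw [mem_ball, dist_eq_norm, add_sub_cancel_left, norm_smul, hne0, Real.norm_eq_abs]
      · linarith [hs]
    set t : ℝ := ε / w 1 with ht
    have htpos : 0 < t := div_pos hε hw1pos
    have ht1 : t ≤ 1 := by
      rw [ht, div_le_one hw1pos]; linarith
    have hcombo := hconv.combo_interior_self_mem_interior hx h0L htpos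
      (by linarith : (0:ℝ) ≤ 1 - t) (by ring)
    rw [smul_zero, add_zero] at hcombo
    refine ⟨hcombo, ?_, ?_⟩
    · have : (t • (w + s • e0)) 1 = t * (w 1 + s * e0 1) := by
        simp [smul_eq_mul, mul_add]
      rw [this, he01]
      rw [ht, mul_zero, add_zero, div_mul_cancel₀ _ hw1pos.ne']
    · have : (t • (w + s • e0)) 0 = t * (w 0 + s * e0 0) := by
        simp [smul_eq_mul, mul_add]
      rw [this, he00, mul_one]
  -- slice maximum: pr ε dominates all points of L at height ε
  have hslice : ∀ ε : ℝ, 0 < ε → ε < ε' → ∀ z ∈ L, z 1 = ε → z 0 ≤ pr ε 0 := by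
    intro ε hε hεε' z hz hz1
    set S : Set E2 := L ∩ {x : E2 | x 1 = ε} with hS
    have hScomp : IsCompact S := hcomp.inter_right
      (isClosed_eq (EuclideanSpace.proj (1 : Fin 2)).continuous continuous_const)
    have hSne : S.Nonempty := ⟨z, hz, hz1⟩
    obtain ⟨m, hmS, hm⟩ := hScomp.exists_isMaxOn hSne
      ((EuclideanSpace.proj (0 : Fin 2)).continuous.continuousOn)
    have hmfront : m ∈ frontier L := by
      by_contra hmf
      have hmint : m ∈ interior L := by
        have : m ∈ L := hmS.1
        rcases hcl.closure_eq ▸ (subset_closure this : m ∈ closure L) with h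
        by_contra hni
        exact hmf ⟨subset_closure this, hni⟩
      obtain ⟨d, hd, hballm⟩ := Metric.isOpen_iff.mp isOpen_interior m hmint
      have hm' : m + (d/2) • e0 ∈ S := by
        constructor
        · apply interior_subset; apply hballm
          rw [mem_ball, dist_eq_norm, add_sub_cancel_left, norm_smul, hne0,
            Real.norm_eq_abs, abs_of_pos (by linarith : (0:ℝ) < d/2)]
          linarith
        · show (m + (d/2) • e0) 1 = ε
          have : (m + (d/2) • e0) 1 = m 1 + (d/2) * e0 1 := by simp [smul_eq_mul]
          rw [this, he01]
          simpa using hmS.2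
      have hle : (m + (d/2) • e0) 0 ≤ m 0 := hm hm'
      have heq : (m + (d/2) • e0) 0 = m 0 + (d/2) * e0 0 := by simp [smul_eq_mul]
      rw [heq, he00, mul_one] at hle
      linarith
    have hm1 : m 1 = ε := hmS.2
    have h1 := ((hmem ε ⟨hε, hεε'⟩).2.2.2.2 m hmfront hm1).2
    have h2 : z 0 ≤ m 0 := hm (⟨hz, hz1⟩ : z ∈ S)
    linarith
  -- negation
  by_contra hcon
  rw [Filter.tendsto_atTop] at hcon
  push_neg at hcon
  obtain ⟨C₀, hC₀⟩ := hcon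
  set C : ℝ := max C₀ 1 with hC
  have hC1 : (1:ℝ) ≤ C := le_max_right _ _
  have hCpos : (0:ℝ) < C := by linarith
  have hfreq : ∀ δ : ℝ, 0 < δ → ∃ ε : ℝ, 0 < ε ∧ ε < δ ∧
      supAngle L (pl ε) + supAngle L (pr ε) < C * ε := by
    intro δ hδ
    have hmem' : Set.Ioo (0:ℝ) δ ∈ nhdsWithin (0:ℝ) (Set.Ioi 0) :=
      Ioo_mem_nhdsGT_of_mem ⟨le_refl 0, hδ⟩
    obtain ⟨ε, h1, h2⟩ := (hC₀.and_eventually (eventually_of_mem hmem' (fun x hx => hx))).exists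
    refine ⟨ε, h2.1, h2.2, ?_⟩
    rw [div_lt_iff₀ h2.1] at h1
    calc supAngle L (pl ε) + supAngle L (pr ε) < C₀ * ε := h1
      _ ≤ C * ε := by
        apply mul_le_mul_of_nonneg_right (le_max_left _ _) h2.1.le
  -- threshold
  set ε₀ : ℝ := min (min ε' (r/2)) (min (r/(8*C*D)) (1/(2*C))) with hε₀
  have hε₀pos : 0 < ε₀ := by
    apply lt_min (lt_min hε' (by positivity)) (lt_min (by positivity) (by positivity))
  have hε₀ε' : ε₀ ≤ ε' := le_trans (min_le_left _ _) (min_le_left _ _)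
  have hε₀r : ε₀ ≤ r/2 := le_trans (min_le_left _ _) (min_le_right _ _)
  have hε₀CD : ε₀ ≤ r/(8*C*D) := le_trans (min_le_right _ _) (min_le_left _ _)
  have hε₀C : ε₀ ≤ 1/(2*C) := le_trans (min_le_right _ _) (min_le_right _ _)
  -- the gap lemma
  have hgap : ∀ ε ε'' : ℝ, 0 < ε'' → ε'' ≤ ε/2 → 0 < ε → ε < ε₀ →
      supAngle L (pl ε) + supAngle L (pr ε) < C * ε →
      pr ε'' 0 ≤ pr ε 0 - 1/(4*C) := by
    intro ε ε'' hε''pos hε''half hεpos hεε₀ hbad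
    have hεε' : ε < ε' := lt_of_lt_of_le hεε₀ hε₀ε'
    have hε''ε' : ε'' < ε' := by linarith
    obtain ⟨hplf, hprf, hpl1, hpr1, _⟩ := hmem ε ⟨hεpos, hεε'⟩
    obtain ⟨_, hprf'', _, hpr1'', _⟩ := hmem ε'' ⟨hε''pos, hε''ε'⟩
    set p : E2 := pr ε with hp
    have hpL : p ∈ L := hfrL hprf
    have hpnotint : p ∉ interior L := by
      exact (hcl.frontier_eq ▸ hprf).2
    obtain ⟨ν, hν⟩ := exists_outer_normal hconv hw hpnotint
    -- angle bound
    have hplnotint : pl ε ∉ interior L := by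
      exact (hcl.frontier_eq ▸ hplf).2
    have hsupl : 0 ≤ supAngle L (pl ε) :=
      supAngle_nonneg (exists_outer_normal hconv hw hplnotint)
    have hsupr : Real.arcsin |ν 0| ≤ supAngle L p := le_supAngle hν
    have harcsin : Real.arcsin |ν 0| < C * ε := by linarith
    have habs1 : |ν 0| ≤ 1 := arith1 (normsq ν hν.1)
    have hν0C : |ν 0| < C * ε := by
      have h1 : |ν 0| = Real.sin (Real.arcsin |ν 0|) :=
        (Real.sin_arcsin (by linarith [abs_nonneg (ν 0)]) habs1).symm
      have h2 : Real.sin (Real.arcsin |ν 0|) ≤ Real.arcsin |ν 0| :=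
        Real.sin_le (Real.arcsin_nonneg.2 (abs_nonneg _))
      linarith
    have hsum1 : ν 0 ^ 2 + ν 1 ^ 2 = 1 := normsq ν hν.1
    -- bounds on ε
    have hεr2 : ε < r/2 := lt_of_lt_of_le hεε₀ hε₀r
    have hεCD : ε < r/(8*C*D) := lt_of_lt_of_le hεε₀ hε₀CD
    have hεC : ε < 1/(2*C) := lt_of_lt_of_le hεε₀ hε₀C
    have hCεhalf : C * ε < 1/2 := by
      rw [lt_div_iff₀ (by positivity : (0:ℝ) < 2*C)] at hεC
      linarith [hεC]
    have hCεCD : C * ε * (2*D) < r/4 := by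
      rw [lt_div_iff₀ (by positivity : (0:ℝ) < 8*C*D)] at hεCD
      exact arith2 hεCD
    -- ν 1 ≤ -1/2
    have hν1neg : ν 1 ≤ -(1/2) := by
      have hwp : ⟪ν, w - p⟫ ≤ -r := normal_inner_le hν hrpos
        (hball.trans interior_subset)
      rw [inner2] at hwp
      have hwp' : ν 0 * (w 0 - p 0) + ν 1 * (w 1 - ε) ≤ -r := by
        have : (w - p) 0 = w 0 - p 0 := by simp
        have h2 : (w - p) 1 = w 1 - p 1 := by simp
        rw [this, h2, hpr1] at hwp
        exact hwp
      have hwbd : |w 0| ≤ D := hcoordD w (interior_subset hw)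
      have hpbd : |p 0| ≤ D := hcoordD p hpL
      have habs : |ν 0 * (w 0 - p 0)| ≤ C * ε * (2*D) := by
        rw [abs_mul]
        apply mul_le_mul hν0C.le _ (abs_nonneg _) (by positivity)
        calc |w 0 - p 0| ≤ |w 0| + |p 0| := abs_sub _ _
          _ ≤ 2*D := by linarith
      have hw1ε : r/2 ≤ w 1 - ε := by linarith
      exact arith3 hwp' habs (by linarith) hw1ε hrpos (by linarith) hsum1
    -- ν 0 > 0
    have hν0pos : 0 < ν 0 := by
      obtain ⟨hz'int, hz'1, hz'0⟩ := hqint ε (r/2) hεpos (by linarith)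
        (by rw [abs_of_pos (by positivity)]; linarith)
      set z' : E2 := (ε / w 1) • (w + (r/2) • e0) with hz'
      have hlt : ⟪ν, z' - p⟫ < 0 := normal_inner_lt hν hz'int
      rw [inner2] at hlt
      have hco : (z' - p) 1 = 0 := by
        have : (z' - p) 1 = z' 1 - p 1 := by simp
        rw [this, hz'1, hpr1]; ring
      have hco0 : (z' - p) 0 = z' 0 - p 0 := by simp
      rw [hco, hco0, mul_zero, add_zero] at hlt
      have hle : z' 0 ≤ p 0 := hslice ε hεpos hεε' z' (interior_subset hz'int) hz'1
      exact arith4 hlt hle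
    -- conclude
    set q : E2 := pr ε'' with hq
    have hqL : q ∈ L := hfrL hprf''
    have hq2 := hν.2 q hqL
    rw [inner2] at hq2
    have hq2' : ν 0 * (q 0 - p 0) + ν 1 * (ε'' - ε) ≤ 0 := by
      have h1 : (q - p) 0 = q 0 - p 0 := by simp
      have h2 : (q - p) 1 = q 1 - p 1 := by simp
      rw [h1, h2, hpr1, hpr1''] at hq2
      exact hq2
    have hν0C' : ν 0 < C * ε := by
      have := abs_le.mp hν0C.le
      calc ν 0 ≤ |ν 0| := le_abs_self _
        _ < C * ε := hν0C
    exact arith5 hq2' hν1neg hε''half hε''pos hν0pos hν0C' hCpos hεpos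
  -- iterate
  obtain ⟨ε₁, hε₁pos, hε₁lt, hε₁bad⟩ := hfreq ε₀ hε₀pos
  have hiter : ∀ n : ℕ, ∃ ε : ℝ, 0 < ε ∧ ε < ε₀ ∧
      supAngle L (pl ε) + supAngle L (pr ε) < C * ε ∧
      pr ε 0 ≤ pr ε₁ 0 - n * (1/(4*C)) := by
    intro n
    induction n with
    | zero => exact ⟨ε₁, hε₁pos, hε₁lt, hε₁bad, by simp⟩
    | succ n ih =>
      obtain ⟨ε, h1, h2, h3, h4⟩ := ih
      obtain ⟨ε'', g1, g2, g3⟩ := hfreq (ε/2) (by positivity)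
      refine ⟨ε'', g1, by linarith, g3, ?_⟩
      have hg := hgap ε ε'' g1 g2.le h1 h2 h3
      push_cast
      linarith
  obtain ⟨n, hn⟩ := exists_nat_gt ((pr ε₁ 0 + D) * (4*C))
  obtain ⟨ε, h1, h2, h3, h4⟩ := hiter n
  have hεε' : ε < ε' := lt_of_lt_of_le h2 hε₀ε'
  have hbd : -D ≤ pr ε 0 := by
    have := hcoordD (pr ε) (hfrL (hmem ε ⟨h1, hεε'⟩).2.1)
    linarith [abs_le.mp this |>.1]
  have hnn : (n:ℝ) * (1/(4*C)) > pr ε₁ 0 + D := by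
    rw [gt_iff_lt, show (n:ℝ) * (1/(4*C)) = n / (4*C) by ring,
      lt_div_iff₀ (by positivity : (0:ℝ) < 4*C)]
    linarith
  linarith
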